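/- Let (Ω, Σ, P) be a probability space, let k be a positive integer, and let X : Ω → (0,∞) be a random variable such that X, log(X), and X^{−i}·(X − E[X])^i for 1 ≤ i ≤ 2k−1 are integrable. Then log(E[X]) − E[log(X)] ≤ −∑_{i=1}^{2k−1} (1/i) · E[X^{−i}·(X − E[X])^i]. -/

import Mathlib

open MeasureTheory ProbabilityTheory Finset

lemma hasDerivAt_S (n : ℕ) (t : ℝ) :
    HasDerivAt (fun t : ℝ => ∑ i ∈ Finset.Icc 1 n, t ^ i / i)
      (∑ i ∈ Finset.Icc 1 n, t ^ (i - 1)) t := by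
  apply HasDerivAt.fun_sum
  intro i hi
  simp only [Finset.mem_Icc] at hi
  have h2 := (hasDerivAt_pow i t).div_const (i : ℝ)
  have hi0 : (i : ℝ) ≠ 0 := Nat.cast_ne_zero.mpr (by omega)
  refine h2.congr_deriv ?_
  field_simp

lemma geom_aux (n : ℕ) (t : ℝ) :
    (∑ i ∈ Finset.Icc 1 n, t ^ (i - 1)) * (1 - t) = 1 - t ^ n := by
  have h : ∑ i ∈ Finset.Icc 1 n, t ^ (i - 1) = ∑ j ∈ Finset.range n, t ^ j := by
    rw [← Finset.Ico_add_one_right_eq_Icc, Finset.sum_Ico_eq_sum_range]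
    simp
  rw [h]
  have := geom_sum_mul t n
  nlinarith [this]

lemma key_ineq (n : ℕ) (hn : Odd n) (t : ℝ) (ht : t < 1) :
    Real.log (1 - t) ≤ -∑ i ∈ Finset.Icc 1 n, t ^ i / i := by
  set S : ℝ → ℝ := fun t => ∑ i ∈ Finset.Icc 1 n, t ^ i / i with hS
  set h : ℝ → ℝ := fun t => Real.exp (S t) * (1 - t) with hh
  have hderiv : ∀ s : ℝ, HasDerivAt h (-s ^ n * Real.exp (S s)) s := by
    intro s
    have h1 : HasDerivAt S (∑ i ∈ Finset.Icc 1 n, s ^ (i - 1)) s := hasDerivAt_S n s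
    have h2 := (h1.exp).mul ((hasDerivAt_id s).const_sub 1)
    refine h2.congr_deriv ?_
    simp only [id_eq]
    linear_combination (Real.exp (S s)) * geom_aux n s
  have hd : Differentiable ℝ h := fun s => (hderiv s).differentiableAt
  have hdval : ∀ s : ℝ, deriv h s = -s ^ n * Real.exp (S s) := fun s => (hderiv s).deriv
  have hmax : ∀ s : ℝ, h s ≤ h 0 := by
    intro s
    rcases le_or_gt s 0 with hs | hs
    · have hmono : MonotoneOn h (Set.Iic 0) := by
        apply monotoneOn_of_deriv_nonneg (convex_Iic 0) hd.continuous.continuousOn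
          (hd.differentiableOn)
        intro x hx
        rw [interior_Iic] at hx
        rw [hdval]
        have : x ^ n < 0 := Odd.pow_neg hn hx
        nlinarith [Real.exp_pos (S x)]
      exact hmono hs Set.self_mem_Iic hs
    · have hmono : AntitoneOn h (Set.Ici 0) := by
        apply antitoneOn_of_deriv_nonpos (convex_Ici 0) hd.continuous.continuousOn
          (hd.differentiableOn)
        intro x hx
        rw [interior_Ici] at hx
        rw [hdval]
        have h1 : 0 < x ^ n := pow_pos hx n
        nlinarith [Real.exp_pos (S x)]
      exact hmono Set.self_mem_Ici hs.le hs.le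
  have h0 : h 0 = 1 := by
    have hs0 : S 0 = 0 := Finset.sum_eq_zero (fun i hi => by
      simp only [Finset.mem_Icc] at hi
      rw [zero_pow (by omega), zero_div])
    simp [hh, hs0]
  have hle : Real.exp (S t) * (1 - t) ≤ 1 := by
    have := hmax t; rw [h0] at this; exact this
  have h1t : (0:ℝ) < 1 - t := by linarith
  have : Real.exp (S t) ≤ (1 - t)⁻¹ := by
    rw [inv_eq_one_div, le_div_iff₀ h1t]
    linarith [hle]
  have hst : S t ≤ Real.log (1 - t)⁻¹ := (Real.le_log_iff_exp_le (by positivity)).mpr this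
  rw [Real.log_inv] at hst
  linarith

theorem jensen_gap_log_higher_order_upper
    {Ω : Type*} [MeasurableSpace Ω] (P : Measure Ω) [IsProbabilityMeasure P]
    (k : ℕ) (hk : 0 < k)
    (X : Ω → ℝ) (hX : ∀ ω, 0 < X ω)
    (hXint : Integrable X P)
    (hlogint : Integrable (fun ω => Real.log (X ω)) P)
    (hmom : ∀ i ∈ Finset.Icc 1 (2 * k - 1),
      Integrable (fun ω => X ω ^ (-(i : ℤ)) * (X ω - ∫ ω', X ω' ∂P) ^ i) P) :
    Real.log (∫ ω, X ω ∂P) - ∫ ω, Real.log (X ω) ∂P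
      ≤ -∑ i ∈ Finset.Icc 1 (2 * k - 1),
          (1 / (i : ℝ)) * (∫ ω, X ω ^ (-(i : ℤ)) * (X ω - ∫ ω', X ω' ∂P) ^ i ∂P) := by
  set μ := ∫ ω, X ω ∂P with hμdef
  have hμ : 0 < μ := by
    rw [hμdef]
    apply integral_pos_iff_support_of_nonneg_ae (Filter.Eventually.of_forall (fun ω => (hX ω).le)) hXint |>.mpr
    · simp only [Function.support, ne_eq]
      have : {ω | X ω ≠ 0} = Set.univ := by
        ext ω; simp [(hX ω).ne']
      rw [this]
      simp
  set n := 2 * k - 1 with hn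
  have hodd : Odd n := ⟨k - 1, by omega⟩
  have hpt : ∀ ω, Real.log μ - Real.log (X ω)
      ≤ ∑ i ∈ Finset.Icc 1 n, -((1 / (i : ℝ)) * (X ω ^ (-(i : ℤ)) * (X ω - μ) ^ i)) := by
    intro ω
    set t := (X ω - μ) / X ω with htdef
    have hXω := hX ω
    have ht1 : t < 1 := by
      rw [htdef, div_lt_one hXω]
      linarith
    have h1t : 1 - t = μ / X ω := by
      rw [htdef]; field_simp; ring
    have hlog : Real.log μ - Real.log (X ω) = Real.log (1 - t) := by
      rw [h1t, Real.log_div hμ.ne' hXω.ne']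
    have hti : ∀ i : ℕ, t ^ i = X ω ^ (-(i : ℤ)) * (X ω - μ) ^ i := by
      intro i
      rw [htdef, div_pow, zpow_neg, zpow_natCast]
      ring
    rw [hlog]
    calc Real.log (1 - t) ≤ -∑ i ∈ Finset.Icc 1 n, t ^ i / i := key_ineq n hodd t ht1
      _ = ∑ i ∈ Finset.Icc 1 n, -((1 / (i : ℝ)) * (X ω ^ (-(i : ℤ)) * (X ω - μ) ^ i)) := by
          rw [← Finset.sum_neg_distrib]
          apply Finset.sum_congr rfl
          intro i hi
          rw [← hti i]
          ring
  have hint_rhs : Integrable (fun ω => ∑ i ∈ Finset.Icc 1 n,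
      -((1 / (i : ℝ)) * (X ω ^ (-(i : ℤ)) * (X ω - μ) ^ i))) P := by
    apply integrable_finset_sum
    intro i hi
    exact (((hmom i hi).const_mul (1 / (i:ℝ))).neg)
  have hint_lhs : Integrable (fun ω => Real.log μ - Real.log (X ω)) P :=
    (integrable_const _).sub hlogint
  have hmono := integral_mono hint_lhs hint_rhs hpt
  rw [integral_sub (integrable_const _) hlogint, integral_const] at hmono
  simp only [probReal_univ, ENNReal.toReal_one, smul_eq_mul, one_mul] at hmono
  have hintg : ∀ i ∈ Finset.Icc 1 n,
      Integrable (fun ω => -((1 / (i:ℝ)) * (X ω ^ (-(i : ℤ)) * (X ω - μ) ^ i))) P :=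
    fun i hi => ((hmom i hi).const_mul (1 / (i:ℝ))).neg
  rw [integral_finset_sum _ hintg] at hmono
  calc Real.log μ - ∫ ω, Real.log (X ω) ∂P
      ≤ ∑ i ∈ Finset.Icc 1 n, ∫ ω, -((1 / (i:ℝ)) * (X ω ^ (-(i : ℤ)) * (X ω - μ) ^ i)) ∂P := hmono
    _ = -∑ i ∈ Finset.Icc 1 n, (1 / (i : ℝ)) * (∫ ω, X ω ^ (-(i : ℤ)) * (X ω - μ) ^ i ∂P) := by
        have heach : ∀ i ∈ Finset.Icc 1 n,
            (∫ ω, -((1 / (i:ℝ)) * (X ω ^ (-(i : ℤ)) * (X ω - μ) ^ i)) ∂P)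
              = -((1 / (i : ℝ)) * (∫ ω, X ω ^ (-(i : ℤ)) * (X ω - μ) ^ i ∂P)) := by
          intro i hi
          rw [integral_neg, integral_const_mul]
        rw [Finset.sum_congr rfl heach, Finset.sum_neg_distrib]
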